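/- Let Ω be a finite connected bipartite subgraph of a weighted graph and p > 1. If f is an eigenfunction of the Dirichlet p-Laplacian on Ω satisfying f(x)·f(y) < 0 for every edge x ∼ y with x, y ∈ Ω, then f is a maximum eigenfunction, i.e., its eigenvalue equals λ_{m,p}(Ω) = sup_{u≢0} E_p(u)/‖u‖_{p,Ω}^p. -/

import Mathlib

open scoped BigOperators

namespace PGraph

variable {V : Type*}

/-- The `p`-Dirichlet energy `E_p(u) = (1/2) ∑_{x,y} μ_{xy} |u(y)-u(x)|^p`. -/
noncomputable def energy (μ : V → V → ℝ) (p : ℝ) (u : V → ℝ) : ℝ :=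
  (1 / 2) * ∑ᶠ x : V, ∑ᶠ y : V, μ x y * |u y - u x| ^ p

/-- `‖u‖_{p,Ω}^p = ∑_{x∈Ω} |u(x)|^p ν_x`. -/
noncomputable def pnormP (ν : V → ℝ) (Ω : Finset V) (p : ℝ) (u : V → ℝ) : ℝ :=
  ∑ x ∈ Ω, |u x| ^ p * ν x

/-- The `p`-Laplacian `Δ_p u(x) = (1/ν_x) ∑_y μ_{xy} |u(y)-u(x)|^{p-2}(u(y)-u(x))`. -/
noncomputable def plap (μ : V → V → ℝ) (ν : V → ℝ) (p : ℝ) (u : V → ℝ) (x : V) : ℝ :=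
  (1 / ν x) * ∑ᶠ y : V, μ x y * (|u y - u x| ^ (p - 2) * (u y - u x))

/-- `u` is an eigenfunction of the Dirichlet `p`-Laplacian on `Ω` with eigenvalue `lam`:
`u` vanishes outside `Ω` (zero extension), `u ≢ 0` on `Ω`, and
`Δ_p u = -lam |u|^{p-2} u` on `Ω`. -/
def IsDirEigenfun (μ : V → V → ℝ) (ν : V → ℝ) (Ω : Finset V) (p : ℝ)
    (u : V → ℝ) (lam : ℝ) : Prop :=
  (∀ x, x ∉ Ω → u x = 0) ∧ (∃ x ∈ Ω, u x ≠ 0) ∧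
    ∀ x ∈ Ω, plap μ ν p u x = -lam * (|u x| ^ (p - 2) * u x)

/-- The first Dirichlet eigenvalue, via the Rayleigh quotient characterization. -/
noncomputable def lam1 (μ : V → V → ℝ) (ν : V → ℝ) (Ω : Finset V) (p : ℝ) : ℝ :=
  sInf {t : ℝ | ∃ u : V → ℝ, (∀ x, x ∉ Ω → u x = 0) ∧ (∃ x ∈ Ω, u x ≠ 0) ∧
    t = energy μ p u / pnormP ν Ω p u}

/-- The maximum Dirichlet eigenvalue, via the Rayleigh quotient characterization. -/
noncomputable def lamMax (μ : V → V → ℝ) (ν : V → ℝ) (Ω : Finset V) (p : ℝ) : ℝ :=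
  sSup {t : ℝ | ∃ u : V → ℝ, (∀ x, x ∉ Ω → u x = 0) ∧ (∃ x ∈ Ω, u x ≠ 0) ∧
    t = energy μ p u / pnormP ν Ω p u}

/-- The induced subgraph on `Ω` is connected. -/
def ConnOn (μ : V → V → ℝ) (Ω : Finset V) : Prop :=
  ∀ x ∈ Ω, ∀ y ∈ Ω,
    Relation.ReflTransGen (fun a b => a ∈ Ω ∧ b ∈ Ω ∧ 0 < μ a b) x y

/-- The induced subgraph on `Ω` is bipartite with parts `V₁, V₂`. -/
def BipartiteOn (μ : V → V → ℝ) (Ω : Finset V) : Prop :=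
  ∃ V₁ V₂ : Set V, (Ω : Set V) = V₁ ∪ V₂ ∧ Disjoint V₁ V₂ ∧
    ∀ x ∈ Ω, ∀ y ∈ Ω, 0 < μ x y → ((x ∈ V₁ ∧ y ∈ V₂) ∨ (x ∈ V₂ ∧ y ∈ V₁))

/-- A locally finite weighted graph: symmetric nonnegative edge weights without
self-loops, finitely many neighbours at each vertex, positive vertex weights. -/
structure IsWeightedGraph (μ : V → V → ℝ) (ν : V → ℝ) : Prop where
  symm : ∀ x y, μ x y = μ y x
  nonneg : ∀ x y, 0 ≤ μ x y
  loopless : ∀ x, μ x x = 0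
  locFin : ∀ x, (Function.support (μ x)).Finite
  nuPos : ∀ x, 0 < ν x

/-- The edge boundary measure `|∂U|_μ` of a finite vertex set `U`. -/
noncomputable def bdryWt (μ : V → V → ℝ) (U : Finset V) : ℝ :=
  ∑ x ∈ U, ∑ᶠ y ∈ {z : V | z ∉ U}, μ x y

/-- The Dirichlet Cheeger constant `h_{μ,ν}(Ω) = min_{∅ ≠ U ⊆ Ω} |∂U|_μ / |U|_ν`. -/
noncomputable def cheeger (μ : V → V → ℝ) (ν : V → ℝ) (Ω : Finset V) : ℝ :=
  sInf {t : ℝ | ∃ U : Finset V, U ⊆ Ω ∧ U.Nonempty ∧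
    t = bdryWt μ U / ∑ x ∈ U, ν x}

end PGraph

namespace PGraph

open Real Set

lemma radon2 {p a b ga gb : ℝ} (hp : 1 ≤ p) (ha : 0 ≤ a) (hb : 0 ≤ b)
    (hga : 0 < ga) (hgb : 0 < gb) :
    (a + b) ^ p ≤ (ga + gb) ^ (p - 1) * (a ^ p / ga ^ (p - 1) + b ^ p / gb ^ (p - 1)) := by
  have hs : 0 < ga + gb := by linarith
  have hcv := (convexOn_rpow hp).2 (show (a/ga : ℝ) ∈ Ici 0 from div_nonneg ha hga.le)
    (show (b/gb : ℝ) ∈ Ici 0 from div_nonneg hb hgb.le)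
    (div_nonneg hga.le hs.le) (div_nonneg hgb.le hs.le)
    (by field_simp)
  simp only [smul_eq_mul] at hcv
  have hmid : ga / (ga + gb) * (a / ga) + gb / (ga + gb) * (b / gb) = (a + b) / (ga + gb) := by
    field_simp
  rw [hmid, Real.div_rpow (by linarith) hs.le, Real.div_rpow ha hga.le,
    Real.div_rpow hb hgb.le] at hcv
  have hsp : (0:ℝ) < (ga + gb) ^ p := Real.rpow_pos_of_pos hs p
  have e0 : (ga+gb)^(p-1) = (ga+gb)^p / (ga+gb) := Real.rpow_sub_one hs.ne' p
  have e2 : ga^(p-1) = ga^p / ga := Real.rpow_sub_one hga.ne' p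
  have e3 : gb^(p-1) = gb^p / gb := Real.rpow_sub_one hgb.ne' p
  have hgap : (0:ℝ) < ga ^ p := Real.rpow_pos_of_pos hga p
  have hgbp : (0:ℝ) < gb ^ p := Real.rpow_pos_of_pos hgb p
  calc (a+b)^p = (a+b)^p / (ga+gb)^p * (ga+gb)^p := by field_simp
    _ ≤ (ga / (ga + gb) * (a^p/ga^p) + gb / (ga + gb) * (b^p/gb^p)) * (ga+gb)^p :=
        mul_le_mul_of_nonneg_right hcv hsp.le
    _ = (ga + gb) ^ (p - 1) * (a ^ p / ga ^ (p - 1) + b ^ p / gb ^ (p - 1)) := by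
        rw [e0, e2, e3]; field_simp

/-- on a finite connected bipartite subgraph `Ω`, an eigenfunction of the
Dirichlet `p`-Laplacian (`p > 1`) that changes sign along every edge of `Ω` is a maximum
eigenfunction, i.e. its eigenvalue equals `λ_{m,p}(Ω)`. -/
theorem sign_eigenfun_is_max {V : Type*} {μ : V → V → ℝ} {ν : V → ℝ}
    (hG : IsWeightedGraph μ ν) {Ω : Finset V} (hconn : ConnOn μ Ω)
    (hbip : BipartiteOn μ Ω) {p : ℝ} (hp : 1 < p) {f : V → ℝ} {lam : ℝ}
    (hf : IsDirEigenfun μ ν Ω p f lam)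
    (hsign : ∀ x ∈ Ω, ∀ y ∈ Ω, 0 < μ x y → f x * f y < 0) :
    lam = lamMax μ ν Ω p := by
  classical
  obtain ⟨hf0, ⟨x0, hx0, hfx0⟩, heig⟩ := hf
  have hp0 : p ≠ 0 := by linarith
  have hp1 : p - 1 ≠ 0 := by intro h; linarith [sub_eq_zero.1 h]
  -- the absolute value of f
  set g : V → ℝ := fun z => |f z| with hgdef
  have hgabs : ∀ z, g z = |f z| := fun z => by rw [hgdef]
  have hgnn : ∀ z, 0 ≤ g z := fun z => by rw [hgabs]; exact abs_nonneg _
  have hg0 : ∀ x, x ∉ Ω → g x = 0 := fun x hx => by rw [hgabs, hf0 x hx, abs_zero]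
  have hfne : ∀ x ∈ Ω, f x ≠ 0 := by
    intro y hy
    rcases (hconn y hy x0 hx0).cases_head with h | ⟨c, ⟨_, hc, hμ⟩, _⟩
    · rw [h]; exact hfx0
    · intro h0
      have := hsign y hy c hc hμ
      rw [h0, zero_mul] at this
      exact lt_irrefl 0 this
  have hgpos : ∀ x ∈ Ω, 0 < g x := fun x hx => by
    rw [hgabs]; exact abs_pos.2 (hfne x hx)
  -- rpow helpers
  have hrp : ∀ c : ℝ, 0 ≤ c → c * c ^ (p-1) = c ^ p := by
    intro c hc
    rcases eq_or_lt_of_le hc with h | h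
    · rw [← h, Real.zero_rpow hp1, Real.zero_rpow hp0, mul_zero]
    · nth_rewrite 1 [← Real.rpow_one c]
      rw [← Real.rpow_add h]; ring_nf
  have hrp2 : ∀ c : ℝ, 0 < c → c ^ (p-2) * c = c ^ (p-1) := by
    intro c hc
    rw [show p - 1 = (p-2) + 1 by ring, Real.rpow_add hc, Real.rpow_one]
  -- the finite "neighbourhood" of Ω
  set N : Finset V := Ω ∪ Ω.biUnion (fun x => (hG.locFin x).toFinset) with hNdef
  have hΩN : Ω ⊆ N := Finset.subset_union_left
  have hpairN : ∀ x y : V, μ x y ≠ 0 → (x ∈ Ω ∨ y ∈ Ω) → x ∈ N ∧ y ∈ N := by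
    intro x y hμ h
    rcases h with h | h
    · exact ⟨hΩN h, Finset.mem_union_right _ (Finset.mem_biUnion.2
        ⟨x, h, (hG.locFin x).mem_toFinset.2 hμ⟩)⟩
    · refine ⟨Finset.mem_union_right _ (Finset.mem_biUnion.2
        ⟨y, h, (hG.locFin y).mem_toFinset.2 ?_⟩), hΩN h⟩
      rw [Function.mem_support, hG.symm y x]; exact hμ
  -- converting double finsums to finite sums over N
  have conv : ∀ G : V → V → ℝ, (∀ x y, G x y ≠ 0 → μ x y ≠ 0 ∧ (x ∈ Ω ∨ y ∈ Ω)) →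
      (∑ᶠ x : V, ∑ᶠ y : V, G x y) = ∑ x ∈ N, ∑ y ∈ N, G x y := by
    intro G hGs
    have hN' : ∀ x y, G x y ≠ 0 → x ∈ N ∧ y ∈ N := fun x y h =>
      hpairN x y (hGs x y h).1 (hGs x y h).2
    have inner : ∀ x, (∑ᶠ y, G x y) = ∑ y ∈ N, G x y := fun x =>
      finsum_eq_sum_of_support_subset _ (fun y hy => (hN' x y hy).2)
    rw [finsum_congr inner]
    refine finsum_eq_sum_of_support_subset _ (fun x hx => ?_)
    obtain ⟨y, _, hy⟩ := Finset.exists_ne_zero_of_sum_ne_zero hx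
    exact (hN' x y hy).1
  -- |f y - f x| = g x + g y on edges
  have habs : ∀ x y, μ x y ≠ 0 → |f y - f x| = g x + g y := by
    intro x y hμ
    rw [hgabs, hgabs]
    by_cases hx : x ∈ Ω <;> by_cases hy : y ∈ Ω
    · have hμ' : 0 < μ x y := (hG.nonneg x y).lt_of_ne (Ne.symm hμ)
      have hs := hsign x hx y hy hμ'
      rcases (hfne x hx).lt_or_gt with h | h
      · have hfy : 0 < f y := by nlinarith
        rw [abs_of_pos (by linarith), abs_of_neg h, abs_of_pos hfy]; ring
      · have hfy : f y < 0 := by nlinarith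
        rw [abs_of_neg (by linarith), abs_of_pos h, abs_of_neg hfy]; ring
    · rw [hf0 y hy, abs_zero, zero_sub, abs_neg, add_zero]
    · rw [hf0 x hx, abs_zero, sub_zero, zero_add]
    · simp [hf0 x hx, hf0 y hy]
  -- single-sum conversion at a fixed x ∈ Ω
  have conv1 : ∀ x ∈ Ω, ∀ w : V → ℝ, (∑ᶠ y, μ x y * w y) = ∑ y ∈ N, μ x y * w y := by
    intro x hx w
    refine finsum_eq_sum_of_support_subset _ (fun y hy => ?_)
    have hμ : μ x y ≠ 0 := fun h => hy (by simp [Function.mem_support, h] at hy ⊢)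
    exact (hpairN x y hμ (Or.inl hx)).2
  -- the key identity coming from the eigenvalue equation
  have key : ∀ x ∈ Ω, ∑ y ∈ N, μ x y * (g x + g y) ^ (p-1) = lam * (ν x * g x ^ (p-1)) := by
    intro x hx
    have hgx := hgpos x hx
    have hν := hG.nuPos x
    set s : ℝ := if 0 < f x then 1 else -1 with hsdef
    have hs1 : s = 1 ∨ s = -1 := by rw [hsdef]; split_ifs <;> simp
    have hfs : |f x| ^ (p - 2) * f x = s * g x ^ (p-1) := by
      rw [hgabs]
      rcases (hfne x hx).lt_or_gt with h | h
      · rw [hsdef, if_neg (not_lt.2 h.le), abs_of_neg h]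
        linear_combination -(hrp2 (-f x) (by linarith))
      · rw [hsdef, if_pos h, abs_of_pos h, one_mul]
        exact hrp2 (f x) h
    have hterm : ∀ y, μ x y * (|f y - f x| ^ (p-2) * (f y - f x))
        = -s * (μ x y * (g x + g y) ^ (p-1)) := by
      intro y
      by_cases hμ : μ x y = 0
      · rw [hμ]; ring
      have habsxy := habs x y hμ
      have hylz : 0 < f x → f y ≤ 0 := by
        intro h
        by_cases hy : y ∈ Ω
        · nlinarith [hsign x hx y hy ((hG.nonneg x y).lt_of_ne (Ne.symm hμ))]
        · rw [hf0 y hy]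
      have hygz : f x < 0 → 0 ≤ f y := by
        intro h
        by_cases hy : y ∈ Ω
        · nlinarith [hsign x hx y hy ((hG.nonneg x y).lt_of_ne (Ne.symm hμ))]
        · rw [hf0 y hy]
      rcases (hfne x hx).lt_or_gt with h | h
      · have hd : 0 < f y - f x := by have := hygz h; linarith
        rw [hsdef, if_neg (not_lt.2 h.le), ← habsxy, abs_of_pos hd, hrp2 _ hd]; ring
      · have hd : f y - f x < 0 := by have := hylz h; linarith
        rw [hsdef, if_pos h, ← habsxy, abs_of_neg hd]
        linear_combination (-(μ x y)) * hrp2 (-(f y - f x)) (by linarith)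
    have heq := heig x hx
    rw [plap, conv1 x hx, hfs] at heq
    have hsum : ∑ y ∈ N, μ x y * (|f y - f x| ^ (p-2) * (f y - f x))
        = -s * ∑ y ∈ N, μ x y * (g x + g y) ^ (p-1) := by
      rw [Finset.mul_sum]; exact Finset.sum_congr rfl fun y _ => hterm y
    rw [hsum] at heq
    rcases hs1 with h | h <;> rw [h] at heq <;> field_simp [hν.ne'] at heq <;>
      linarith
  -- master symmetrization identity
  have master : ∀ w : V → ℝ, (∀ x, x ∉ Ω → w x = 0) →
      (∑ x ∈ Ω, w x * (lam * (ν x * g x ^ (p-1))))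
        = (1/2) * ∑ x ∈ N, ∑ y ∈ N, μ x y * ((g x + g y)^(p-1) * (w x + w y)) := by
    intro w hw
    have e1 : ∀ x ∈ Ω, w x * (lam * (ν x * g x ^ (p-1)))
        = ∑ y ∈ N, μ x y * ((g x + g y)^(p-1) * w x) := by
      intro x hx
      rw [← key x hx, Finset.mul_sum]
      exact Finset.sum_congr rfl fun y _ => by ring
    have step1 : ∑ x ∈ Ω, w x * (lam * (ν x * g x ^ (p-1)))
        = ∑ x ∈ N, ∑ y ∈ N, μ x y * ((g x + g y)^(p-1) * w x) := by
      rw [Finset.sum_congr rfl e1]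
      exact Finset.sum_subset hΩN fun x _ hxΩ =>
        Finset.sum_eq_zero fun y _ => by rw [hw x hxΩ, mul_zero, mul_zero]
    rw [step1]
    have hsw : ∑ x ∈ N, ∑ y ∈ N, μ x y * ((g x + g y)^(p-1) * w x)
        = ∑ x ∈ N, ∑ y ∈ N, μ x y * ((g x + g y)^(p-1) * w y) := by
      rw [Finset.sum_comm]
      exact Finset.sum_congr rfl fun x _ => Finset.sum_congr rfl fun y _ => by
        rw [hG.symm y x, add_comm (g y) (g x)]
    have hcomb : ∑ x ∈ N, ∑ y ∈ N, μ x y * ((g x + g y)^(p-1) * (w x + w y))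
        = (∑ x ∈ N, ∑ y ∈ N, μ x y * ((g x + g y)^(p-1) * w x))
          + ∑ x ∈ N, ∑ y ∈ N, μ x y * ((g x + g y)^(p-1) * w y) := by
      rw [← Finset.sum_add_distrib]
      refine Finset.sum_congr rfl fun x _ => ?_
      rw [← Finset.sum_add_distrib]
      exact Finset.sum_congr rfl fun y _ => by ring
    rw [hcomb, ← hsw]; ring
  -- (A) the eigenvalue identity for f itself
  have hEf : energy μ p f = lam * pnormP ν Ω p f := by
    have h1 : energy μ p f = (1/2) * ∑ x ∈ N, ∑ y ∈ N, μ x y * |f y - f x| ^ p := by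
      rw [energy, conv]
      intro x y h
      refine ⟨fun h0 => h (by rw [h0, zero_mul]), ?_⟩
      by_contra hc
      push_neg at hc
      rw [hf0 x hc.1, hf0 y hc.2] at h
      simp [Real.zero_rpow hp0] at h
    have h2 : ∀ x ∈ N, ∀ y ∈ N, μ x y * |f y - f x| ^ p
        = μ x y * ((g x + g y)^(p-1) * (g x + g y)) := by
      intro x _ y _
      by_cases hμ : μ x y = 0
      · rw [hμ, zero_mul, zero_mul]
      · rw [habs x y hμ, ← hrp _ (add_nonneg (hgnn x) (hgnn y))]; ring
    rw [h1, Finset.sum_congr rfl fun x hx => Finset.sum_congr rfl fun y hy => h2 x hx y hy,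
      ← master g hg0, pnormP, Finset.mul_sum]
    refine Finset.sum_congr rfl fun x hx => ?_
    rw [← hgabs]
    linear_combination (lam * ν x) * hrp (g x) (hgnn x)
  -- (B) the Rayleigh quotient bound for arbitrary test functions
  have hEB : ∀ u : V → ℝ, (∀ x, x ∉ Ω → u x = 0) → energy μ p u ≤ lam * pnormP ν Ω p u := by
    intro u hu0
    set t : V → ℝ := fun x => if x ∈ Ω then |u x| ^ p / g x ^ (p-1) else 0 with htdef
    have ht0 : ∀ x, x ∉ Ω → t x = 0 := fun x hx => by rw [htdef]; simp [hx]
    have ht : ∀ x ∈ Ω, t x = |u x| ^ p / g x ^ (p-1) := fun x hx => by rw [htdef]; simp [hx]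
    have h1 : lam * pnormP ν Ω p u = ∑ x ∈ Ω, t x * (lam * (ν x * g x ^ (p-1))) := by
      rw [pnormP, Finset.mul_sum]
      refine Finset.sum_congr rfl fun x hx => ?_
      rw [ht x hx]
      have hgp : g x ^ (p-1) ≠ 0 := (Real.rpow_pos_of_pos (hgpos x hx) _).ne'
      field_simp
    have h2 : energy μ p u = (1/2) * ∑ x ∈ N, ∑ y ∈ N, μ x y * |u y - u x| ^ p := by
      rw [energy, conv]
      intro x y h
      refine ⟨fun h0 => h (by rw [h0, zero_mul]), ?_⟩
      by_contra hc
      push_neg at hc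
      rw [hu0 x hc.1, hu0 y hc.2] at h
      simp [Real.zero_rpow hp0] at h
    have hpt : ∀ x y : V, |u y - u x| ^ p ≤ (g x + g y)^(p-1) * (t x + t y) := by
      intro x y
      have habs1 : |u y - u x| ^ p ≤ (|u x| + |u y|) ^ p := by
        apply Real.rpow_le_rpow (abs_nonneg _) _ (by linarith)
        calc |u y - u x| ≤ |u y| + |u x| := abs_sub _ _
          _ = |u x| + |u y| := add_comm _ _
      refine habs1.trans ?_
      by_cases hx : x ∈ Ω <;> by_cases hy : y ∈ Ω
      · rw [ht x hx, ht y hy]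
        exact radon2 hp.le (abs_nonneg _) (abs_nonneg _) (hgpos x hx) (hgpos y hy)
      · have hgp : g x ^ (p-1) ≠ 0 := (Real.rpow_pos_of_pos (hgpos x hx) _).ne'
        rw [ht x hx, ht0 y hy, hu0 y hy, hg0 y hy]
        simp only [abs_zero, add_zero]
        rw [mul_comm, div_mul_cancel₀ _ hgp]
      · have hgp : g y ^ (p-1) ≠ 0 := (Real.rpow_pos_of_pos (hgpos y hy) _).ne'
        rw [ht0 x hx, ht y hy, hu0 x hx, hg0 x hx]
        simp only [abs_zero, zero_add]
        rw [mul_comm, div_mul_cancel₀ _ hgp]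
      · rw [ht0 x hx, ht0 y hy, hu0 x hx, hu0 y hy, hg0 x hx, hg0 y hy]
        simp [Real.zero_rpow hp0]
    calc energy μ p u = (1/2) * ∑ x ∈ N, ∑ y ∈ N, μ x y * |u y - u x| ^ p := h2
      _ ≤ (1/2) * ∑ x ∈ N, ∑ y ∈ N, μ x y * ((g x + g y)^(p-1) * (t x + t y)) := by
          refine mul_le_mul_of_nonneg_left ?_ (by norm_num)
          refine Finset.sum_le_sum fun x _ => Finset.sum_le_sum fun y _ =>
            mul_le_mul_of_nonneg_left (hpt x y) (hG.nonneg x y)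
      _ = ∑ x ∈ Ω, t x * (lam * (ν x * g x ^ (p-1))) := (master t ht0).symm
      _ = lam * pnormP ν Ω p u := h1.symm
  -- positivity of the norm
  have hpn : ∀ u : V → ℝ, (∃ x ∈ Ω, u x ≠ 0) → 0 < pnormP ν Ω p u := by
    rintro u ⟨z, hz, huz⟩
    refine Finset.sum_pos'
      (fun i _ => mul_nonneg (Real.rpow_nonneg (abs_nonneg _) _) (hG.nuPos i).le)
      ⟨z, hz, mul_pos (Real.rpow_pos_of_pos (abs_pos.2 huz) _) (hG.nuPos z)⟩
  -- conclusion
  have hmem : lam ∈ {t : ℝ | ∃ u : V → ℝ, (∀ x, x ∉ Ω → u x = 0) ∧ (∃ x ∈ Ω, u x ≠ 0) ∧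
      t = energy μ p u / pnormP ν Ω p u} := by
    refine ⟨f, hf0, ⟨x0, hx0, hfx0⟩, ?_⟩
    rw [hEf, mul_div_assoc, div_self (hpn f ⟨x0, hx0, hfx0⟩).ne', mul_one]
  have hub : ∀ τ ∈ {t : ℝ | ∃ u : V → ℝ, (∀ x, x ∉ Ω → u x = 0) ∧ (∃ x ∈ Ω, u x ≠ 0) ∧
      t = energy μ p u / pnormP ν Ω p u}, τ ≤ lam := by
    rintro τ ⟨u, hu0, hune, rfl⟩
    rw [div_le_iff₀ (hpn u hune)]
    exact hEB u hu0
  rw [lamMax]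
  exact le_antisymm (le_csSup ⟨lam, hub⟩ hmem) (csSup_le ⟨lam, hmem⟩ hub)

end PGraph
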